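/- Let G be a simple graph with minimum degree at least 2 and average degree d̄. If e⃗ is a uniformly random directed edge of G, then for every i ≥ 0 the expected number of non-returning walks of i+1 edges starting with e⃗ satisfies E[n_i(e⃗)] ≥ (d̄-1)^i. -/

import Mathlib

variable {V : Type*}

/-- `w : Fin (i+1) → V` is a non-returning walk of `i` edges in `G`:
consecutive vertices are adjacent and there is no immediate backtracking. -/
def IsNR (G : SimpleGraph V) (i : ℕ) (w : Fin (i + 1) → V) : Prop :=
  (∀ j : ℕ, ∀ _h : j < i, G.Adj (w ⟨j, by omega⟩) (w ⟨j + 1, by omega⟩)) ∧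
  (∀ j : ℕ, ∀ _h : j + 2 ≤ i, w ⟨j, by omega⟩ ≠ w ⟨j + 2, by omega⟩)

/-- `nV G i v` : the number of non-returning walks of `i` edges starting at `v`. -/
noncomputable def nV (G : SimpleGraph V) (i : ℕ) (v : V) : ℕ :=
  Nat.card {w : Fin (i + 1) → V // IsNR G i w ∧ w 0 = v}

/-- `nE G i u v` : the number of non-returning walks of `i + 1` edges whose
first edge is the directed edge `(u, v)`. -/
noncomputable def nE (G : SimpleGraph V) (i : ℕ) (u v : V) : ℕ :=
  Nat.card {w : Fin (i + 2) → V // IsNR G (i + 1) w ∧ w 0 = u ∧ w 1 = v}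

set_option linter.unusedSectionVars false
set_option linter.unusedTactic false
set_option linter.deprecated false

open Finset

section Aux

open scoped Classical

variable {V : Type*} [Fintype V]

def extW {k : ℕ} (w : Fin (k + 1) → V) (t : ℕ) : V :=
  w ⟨min t k, Nat.lt_succ_of_le (Nat.min_le_right t k)⟩

lemma extW_eq {k : ℕ} (w : Fin (k + 1) → V) {t : ℕ} (h : t ≤ k) :
    extW w t = w ⟨t, by omega⟩ := by
  unfold extW; congr 1; exact Fin.ext (Nat.min_eq_left h)

lemma extW_tail {k : ℕ} (w : Fin (k + 2) → V) (t : ℕ) :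
    extW (Fin.tail w) t = extW w (t + 1) := by
  unfold extW Fin.tail
  congr 1
  apply Fin.ext
  simp only [Fin.val_succ]
  omega

lemma extW_rev {k : ℕ} (w : Fin (k + 1) → V) (t : ℕ) (h : t ≤ k) :
    extW (fun j => w j.rev) t = extW w (k - t) := by
  unfold extW
  beta_reduce
  congr 1
  apply Fin.ext
  simp only [Fin.val_rev]
  omega

lemma extW_cons_succ {k : ℕ} (x : V) (w : Fin (k + 1) → V) (t : ℕ) :
    extW (Fin.cons x w) (t + 1) = extW w t := by
  rw [← extW_tail (Fin.cons x w) t, Fin.tail_cons]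

lemma extW_cons_zero {k : ℕ} (x : V) (w : Fin (k + 1) → V) :
    extW (Fin.cons x w) 0 = x := by
  rw [extW_eq (Fin.cons x w) (Nat.zero_le _)]
  have h0 : (⟨0, by omega⟩ : Fin (k + 2)) = 0 := Fin.ext (by simp)
  rw [h0, Fin.cons_zero]

variable (G : SimpleGraph V)

lemma isNR_iff_ext {k : ℕ} (w : Fin (k + 1) → V) :
    IsNR G k w ↔ (∀ j, j < k → G.Adj (extW w j) (extW w (j + 1))) ∧
      (∀ j, j + 2 ≤ k → extW w j ≠ extW w (j + 2)) := by
  unfold IsNR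
  constructor
  · rintro ⟨h1, h2⟩
    constructor
    · intro j hj
      rw [extW_eq w (by omega), extW_eq w (by omega)]
      exact h1 j hj
    · intro j hj
      rw [extW_eq w (by omega), extW_eq w (by omega)]
      exact h2 j hj
  · rintro ⟨h1, h2⟩
    constructor
    · intro j hj
      have := h1 j hj
      rwa [extW_eq w (by omega), extW_eq w (by omega)] at this
    · intro j hj
      have := h2 j hj
      rwa [extW_eq w (by omega), extW_eq w (by omega)] at this

lemma isNR_cons_iff {k : ℕ} (hk : 1 ≤ k) (x : V) (w : Fin (k + 1) → V) :
    IsNR G (k + 1) (Fin.cons x w) ↔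
      IsNR G k w ∧ G.Adj x (extW w 0) ∧ x ≠ extW w 1 := by
  rw [isNR_iff_ext, isNR_iff_ext]
  constructor
  · rintro ⟨h1, h2⟩
    refine ⟨⟨fun j hj => ?_, fun j hj => ?_⟩, ?_, ?_⟩
    · have := h1 (j + 1) (by omega)
      rwa [extW_cons_succ, show j + 1 + 1 = (j + 1) + 1 from rfl, extW_cons_succ] at this
    · have := h2 (j + 1) (by omega)
      rwa [show j + 1 + 2 = (j + 2) + 1 from by omega, extW_cons_succ, extW_cons_succ] at this
    · have := h1 0 (by omega)
      rwa [extW_cons_zero, show (0 : ℕ) + 1 = 0 + 1 from rfl, extW_cons_succ] at this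
    · have := h2 0 (by omega)
      rwa [extW_cons_zero, show (0 : ℕ) + 2 = 1 + 1 from by omega, extW_cons_succ] at this
  · rintro ⟨⟨h1, h2⟩, ha, hb⟩
    constructor
    · intro j hj
      match j with
      | 0 =>
        rw [extW_cons_zero, show (0 : ℕ) + 1 = 0 + 1 from rfl, extW_cons_succ]
        exact ha
      | Nat.succ j =>
        rw [show j + 1 + 1 = (j + 1) + 1 from rfl, extW_cons_succ, extW_cons_succ]
        exact h1 j (by omega)
    · intro j hj
      match j with
      | 0 =>
        rw [extW_cons_zero, show (0 : ℕ) + 2 = 1 + 1 from by omega, extW_cons_succ]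
        exact hb
      | Nat.succ j =>
        rw [show j + 1 + 2 = (j + 2) + 1 from by omega, extW_cons_succ, extW_cons_succ]
        exact h2 j (by omega)

lemma isNR_rev {k : ℕ} {w : Fin (k + 1) → V} (h : IsNR G k w) :
    IsNR G k (fun j => w j.rev) := by
  rw [isNR_iff_ext] at h ⊢
  obtain ⟨h1, h2⟩ := h
  constructor
  · intro j hj
    rw [extW_rev w j (by omega), extW_rev w (j + 1) (by omega)]
    have := h1 (k - j - 1) (by omega)
    rw [show k - j - 1 + 1 = k - j from by omega] at this
    rw [show k - (j + 1) = k - j - 1 from by omega]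
    exact this.symm
  · intro j hj
    rw [extW_rev w j (by omega), extW_rev w (j + 2) (by omega)]
    have := (h2 (k - (j + 2)) (by omega)).symm
    rw [show k - (j + 2) + 2 = k - j from by omega] at this
    exact this

lemma isNR_one_iff (w : Fin 2 → V) : IsNR G 1 w ↔ G.Adj (w 0) (w 1) := by
  unfold IsNR
  constructor
  · rintro ⟨h1, -⟩
    have := h1 0 (by omega)
    rwa [show (⟨0, by omega⟩ : Fin 2) = 0 from rfl, show (⟨0 + 1, by omega⟩ : Fin 2) = 1 from rfl]
      at this
  · intro h
    refine ⟨fun j hj => ?_, fun j hj => by omega⟩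
    interval_cases j
    rwa [show (⟨0, by omega⟩ : Fin 2) = 0 from rfl, show (⟨0 + 1, by omega⟩ : Fin 2) = 1 from rfl]


noncomputable def NRF (G : SimpleGraph V) (k : ℕ) : Finset (Fin (k + 1) → V) :=
  univ.filter (IsNR G k)

lemma mem_NRF {G : SimpleGraph V} {k : ℕ} {w : Fin (k + 1) → V} :
    w ∈ NRF G k ↔ IsNR G k w := by simp [NRF]

variable [DecidableRel G.Adj]

noncomputable def wtW (G : SimpleGraph V) [DecidableRel G.Adj] {k : ℕ}
    (w : Fin (k + 1) → V) : ℝ :=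
  ∏ t ∈ range (k - 1), ((G.degree (extW w (t + 1)) : ℝ) - 1)⁻¹

lemma wtW_cons {k : ℕ} (hk : 1 ≤ k) (x : V) (w : Fin (k + 1) → V) :
    wtW G (Fin.cons x w) = ((G.degree (extW w 0) : ℝ) - 1)⁻¹ * wtW G w := by
  obtain ⟨k, rfl⟩ : ∃ k', k = k' + 1 := ⟨k - 1, by omega⟩
  unfold wtW
  rw [show k + 1 + 1 - 1 = k + 1 from rfl, show k + 1 - 1 = k from rfl]
  have he : ∀ t : ℕ, extW (Fin.cons x w) (t + 1) = extW w t := extW_cons_succ x w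
  calc ∏ t ∈ range (k + 1), ((G.degree (extW (Fin.cons x w) (t + 1)) : ℝ) - 1)⁻¹
      = ∏ t ∈ range (k + 1), ((G.degree (extW w t) : ℝ) - 1)⁻¹ := by
        exact Finset.prod_congr rfl fun t _ => by rw [he]
    _ = (∏ t ∈ range k, ((G.degree (extW w (t + 1)) : ℝ) - 1)⁻¹) *
          ((G.degree (extW w 0) : ℝ) - 1)⁻¹ :=
        Finset.prod_range_succ' _ k
    _ = ((G.degree (extW w 0) : ℝ) - 1)⁻¹ *
          ∏ t ∈ range k, ((G.degree (extW w (t + 1)) : ℝ) - 1)⁻¹ := mul_comm _ _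

lemma wtW_tail {k : ℕ} (hk : 1 ≤ k) (w : Fin (k + 2) → V) :
    wtW G w = ((G.degree (extW (Fin.tail w) 0) : ℝ) - 1)⁻¹ * wtW G (Fin.tail w) := by
  conv_lhs => rw [← Fin.cons_self_tail w]
  rw [wtW_cons G hk]

lemma wtW_rev {k : ℕ} (w : Fin (k + 1) → V) :
    wtW G (fun j => w j.rev) = wtW G w := by
  unfold wtW
  rw [← Finset.prod_range_reflect]
  refine Finset.prod_congr rfl fun t ht => ?_
  rw [Finset.mem_range] at ht
  rw [extW_rev w (k - 1 - 1 - t + 1) (by omega), show k - (k - 1 - 1 - t + 1) = t + 1 from by omega]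

lemma sum_NRF_rev {k : ℕ} (g : (Fin (k + 1) → V) → ℝ) :
    ∑ w ∈ NRF G k, g w = ∑ w ∈ NRF G k, g (fun j => w j.rev) := by
  apply Finset.sum_nbij' (i := fun w => fun j => w (Fin.rev j))
    (j := fun w => fun j => w (Fin.rev j))
  · intro w hw
    exact mem_NRF.2 (isNR_rev G (mem_NRF.1 hw))
  · intro w hw
    exact mem_NRF.2 (isNR_rev G (mem_NRF.1 hw))
  · intro w hw
    funext j
    simp [Fin.rev_rev]
  · intro w hw
    funext j
    simp [Fin.rev_rev]
  · intro w hw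
    exact (congrArg g (funext fun j => by simp [Fin.rev_rev])).symm


lemma card_filter_adj_ne (u y : V) (h : G.Adj u y) :
    (univ.filter fun x => G.Adj x u ∧ x ≠ y).card = G.degree u - 1 := by
  have : (univ.filter fun x => G.Adj x u ∧ x ≠ y) = (G.neighborFinset u).erase y := by
    ext z
    simp only [Finset.mem_filter, Finset.mem_univ, true_and, Finset.mem_erase,
      SimpleGraph.mem_neighborFinset]
    rw [G.adj_comm]
    tauto
  rw [this, Finset.card_erase_of_mem (by rwa [SimpleGraph.mem_neighborFinset])]
  rfl

/-- Front-peeling: summing a statistic of the tail over non-returning walks. -/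
lemma sum_NRF_cons {k : ℕ} (hdeg : ∀ v : V, 2 ≤ G.degree v) (hk : 1 ≤ k)
    (g : (Fin (k + 1) → V) → ℝ) :
    ∑ w ∈ NRF G (k + 1), g (Fin.tail w)
      = ∑ w ∈ NRF G k, ((G.degree (extW w 0) : ℝ) - 1) * g w := by
  have h1 : ∑ w ∈ NRF G (k + 1), g (Fin.tail w)
      = ∑ w : Fin (k + 2) → V, if IsNR G (k + 1) w then g (Fin.tail w) else 0 := by
    rw [NRF, Finset.sum_filter]
  rw [h1, ← Equiv.sum_comp (Fin.consEquiv (fun _ : Fin (k + 2) => V))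
    (fun w => if IsNR G (k + 1) w then g (Fin.tail w) else 0), Fintype.sum_prod_type]
  have h2 : ∀ (x : V) (w : Fin (k + 1) → V),
      (if IsNR G (k + 1) (Fin.cons x w) then g (Fin.tail (Fin.cons x w : Fin (k + 2) → V)) else 0)
        = if IsNR G k w ∧ G.Adj x (extW w 0) ∧ x ≠ extW w 1 then g w else 0 := by
    intro x w
    rw [Fin.tail_cons, isNR_cons_iff G hk]
    by_cases h : IsNR G k w ∧ G.Adj x (extW w 0) ∧ x ≠ extW w 1 <;> simp [h]
  calc ∑ x : V, ∑ w : Fin (k + 1) → V,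
        (if IsNR G (k + 1) ((Fin.consEquiv fun _ => V) (x, w)) then
          g (Fin.tail ((Fin.consEquiv fun _ => V) (x, w))) else 0)
      = ∑ x : V, ∑ w : Fin (k + 1) → V,
          (if IsNR G k w ∧ G.Adj x (extW w 0) ∧ x ≠ extW w 1 then g w else 0) := by
        refine Finset.sum_congr rfl fun x _ => Finset.sum_congr rfl fun w _ => h2 x w
    _ = ∑ w : Fin (k + 1) → V, ∑ x : V,
          (if IsNR G k w ∧ G.Adj x (extW w 0) ∧ x ≠ extW w 1 then g w else 0) :=
        Finset.sum_comm
    _ = ∑ w ∈ NRF G k, ((G.degree (extW w 0) : ℝ) - 1) * g w := by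
        rw [NRF, Finset.sum_filter]
        refine Finset.sum_congr rfl fun w _ => ?_
        by_cases hw : IsNR G k w
        · simp only [hw, true_and, if_true]
          have hadj : G.Adj (extW w 0) (extW w 1) := by
            have := ((isNR_iff_ext G w).1 hw).1 0 (by omega)
            simpa using this
          calc ∑ x : V, (if G.Adj x (extW w 0) ∧ x ≠ extW w 1 then g w else 0)
              = ∑ x ∈ univ.filter (fun x => G.Adj x (extW w 0) ∧ x ≠ extW w 1), g w := by
                rw [Finset.sum_filter]
            _ = ((univ.filter (fun x => G.Adj x (extW w 0) ∧ x ≠ extW w 1)).card : ℝ) * g w := by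
                rw [Finset.sum_const, nsmul_eq_mul]
            _ = ((G.degree (extW w 0) : ℝ) - 1) * g w := by
                rw [card_filter_adj_ne G _ _ hadj]
                have h2d := hdeg (extW w 0)
                have : ((G.degree (extW w 0) - 1 : ℕ) : ℝ)
                    = (G.degree (extW w 0) : ℝ) - 1 := by
                  push_cast [Nat.cast_sub (by omega : 1 ≤ G.degree (extW w 0))]
                  ring
                rw [this]
        · simp only [hw, false_and, if_false, Finset.sum_const_zero]


lemma sum_NRF_one (f : V → V → ℝ) :
    ∑ w ∈ NRF G 1, f (w 0) (w 1) = ∑ u : V, ∑ y ∈ G.neighborFinset u, f u y := by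
  rw [NRF, Finset.sum_filter,
    ← Equiv.sum_comp (finTwoArrowEquiv V).symm
      (fun w : Fin 2 → V => if IsNR G 1 w then f (w 0) (w 1) else 0),
    Fintype.sum_prod_type]
  refine Finset.sum_congr rfl fun u _ => ?_
  rw [SimpleGraph.neighborFinset_eq_filter, Finset.sum_filter]
  refine Finset.sum_congr rfl fun y _ => ?_
  have h0 : (finTwoArrowEquiv V).symm (u, y) 0 = u := rfl
  have h1 : (finTwoArrowEquiv V).symm (u, y) 1 = y := rfl
  rw [isNR_one_iff, h0, h1]
  by_cases h : G.Adj u y <;> simp [h]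

lemma degree_real_pos (hdeg : ∀ v : V, 2 ≤ G.degree v) (v : V) :
    (0 : ℝ) < (G.degree v : ℝ) - 1 := by
  have := hdeg v
  have : (2 : ℝ) ≤ (G.degree v : ℝ) := by exact_mod_cast this
  linarith

lemma sum_wtW (hdeg : ∀ v : V, 2 ≤ G.degree v) :
    ∀ k, 1 ≤ k → ∑ w ∈ NRF G k, wtW G w = ∑ v, (G.degree v : ℝ) := by
  refine Nat.le_induction ?_ ?_
  · have hw : ∀ w ∈ NRF G 1, wtW G w = (fun (u y : V) => (1:ℝ)) (w 0) (w 1) := by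
      intro w _
      unfold wtW
      simp
    rw [Finset.sum_congr rfl hw, sum_NRF_one G (fun _ _ => (1:ℝ))]
    refine Finset.sum_congr rfl fun u _ => ?_
    rw [Finset.sum_const, nsmul_eq_mul, mul_one]
    rfl
  · intro k hk IH
    have hsplit : ∀ w ∈ NRF G (k + 1), wtW G w
        = (fun w' : Fin (k + 1) → V => ((G.degree (extW w' 0) : ℝ) - 1)⁻¹ * wtW G w')
            (Fin.tail w) :=
      fun w _ => wtW_tail G hk w
    rw [Finset.sum_congr rfl hsplit, sum_NRF_cons G hdeg hk
      (fun w' : Fin (k + 1) → V => ((G.degree (extW w' 0) : ℝ) - 1)⁻¹ * wtW G w')]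
    rw [← IH]
    refine Finset.sum_congr rfl fun w _ => ?_
    rw [← mul_assoc, mul_inv_cancel₀ (ne_of_gt (degree_real_pos G hdeg _)), one_mul]

lemma sum_wtW_last (hdeg : ∀ v : V, 2 ≤ G.degree v) :
    ∀ k, 1 ≤ k → ∀ F : V → ℝ,
      ∑ w ∈ NRF G k, wtW G w * F (extW w k) = ∑ v, (G.degree v : ℝ) * F v := by
  refine Nat.le_induction ?_ ?_
  · intro F
    have hw : ∀ w ∈ NRF G 1, wtW G w * F (extW w 1)
        = (fun (u y : V) => F y) (w 0) (w 1) := by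
      intro w _
      unfold wtW
      rw [extW_eq w (le_refl 1)]
      simp
    rw [Finset.sum_congr rfl hw, sum_NRF_one G (fun _ y => F y)]
    have hrw : ∀ u : V, ∑ y ∈ G.neighborFinset u, F y
        = ∑ y : V, if G.Adj u y then F y else 0 := fun u => by
      rw [SimpleGraph.neighborFinset_eq_filter, Finset.sum_filter]
    rw [Finset.sum_congr rfl (fun u _ => hrw u), Finset.sum_comm]
    refine Finset.sum_congr rfl fun y _ => ?_
    rw [← Finset.sum_filter, Finset.sum_const, nsmul_eq_mul]
    congr 1
    have : (univ.filter fun u => G.Adj u y) = G.neighborFinset y := by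
      ext z
      simp [SimpleGraph.mem_neighborFinset, G.adj_comm]
    rw [this]
    rfl
  · intro k hk IH F
    have hsplit : ∀ w ∈ NRF G (k + 1), wtW G w * F (extW w (k + 1))
        = (fun w' : Fin (k + 1) → V =>
            ((G.degree (extW w' 0) : ℝ) - 1)⁻¹ * (wtW G w' * F (extW w' k)))
            (Fin.tail w) := by
      intro w _
      rw [wtW_tail G hk w, ← extW_tail w k, mul_assoc]
    rw [Finset.sum_congr rfl hsplit, sum_NRF_cons G hdeg hk
      (fun w' : Fin (k + 1) → V =>
        ((G.degree (extW w' 0) : ℝ) - 1)⁻¹ * (wtW G w' * F (extW w' k))), ← IH F]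
    refine Finset.sum_congr rfl fun w _ => ?_
    rw [← mul_assoc, mul_inv_cancel₀ (ne_of_gt (degree_real_pos G hdeg _)), one_mul]


lemma sum_wtW_first (hdeg : ∀ v : V, 2 ≤ G.degree v) (k : ℕ) (hk : 1 ≤ k) (F : V → ℝ) :
    ∑ w ∈ NRF G k, wtW G w * F (extW w 0) = ∑ v, (G.degree v : ℝ) * F v := by
  rw [sum_NRF_rev G (fun w => wtW G w * F (extW w 0))]
  have hptw : ∀ w ∈ NRF G k,
      wtW G (fun j => w j.rev) * F (extW (fun j => w j.rev) 0)
        = wtW G w * F (extW w k) := by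
    intro w _
    rw [wtW_rev, extW_rev w 0 (Nat.zero_le _), Nat.sub_zero]
  rw [Finset.sum_congr rfl hptw]
  exact sum_wtW_last G hdeg k hk F

lemma sum_wtW_marg (hdeg : ∀ v : V, 2 ≤ G.degree v) :
    ∀ k j, 1 ≤ j → j + 1 ≤ k → ∀ F : V → ℝ,
      ∑ w ∈ NRF G k, wtW G w * F (extW w j) = ∑ v, (G.degree v : ℝ) * F v := by
  intro k
  induction k with
  | zero => intro j h1 h2 F; omega
  | succ k IH =>
    intro j hj hjk F
    have hk : 1 ≤ k := by omega
    have hsplit : ∀ w ∈ NRF G (k + 1), wtW G w * F (extW w j)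
        = (fun w' : Fin (k + 1) → V =>
            ((G.degree (extW w' 0) : ℝ) - 1)⁻¹ * (wtW G w' * F (extW w' (j - 1))))
            (Fin.tail w) := by
      intro w _
      beta_reduce
      rw [wtW_tail G hk w, extW_tail w (j - 1), show j - 1 + 1 = j from by omega, mul_assoc]
    rw [Finset.sum_congr rfl hsplit, sum_NRF_cons G hdeg hk
      (fun w' : Fin (k + 1) → V =>
        ((G.degree (extW w' 0) : ℝ) - 1)⁻¹ * (wtW G w' * F (extW w' (j - 1))))]
    have hcancel : ∀ w ∈ NRF G k,
        ((G.degree (extW w 0) : ℝ) - 1) *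
            (((G.degree (extW w 0) : ℝ) - 1)⁻¹ * (wtW G w * F (extW w (j - 1))))
          = wtW G w * F (extW w (j - 1)) := by
      intro w _
      rw [← mul_assoc, mul_inv_cancel₀ (ne_of_gt (degree_real_pos G hdeg _)), one_mul]
    rw [Finset.sum_congr rfl hcancel]
    by_cases hj1 : j = 1
    · subst hj1
      simpa using sum_wtW_first G hdeg k hk F
    · exact IH (j - 1) (by omega) (by omega) F


lemma convexOn_aux : ConvexOn ℝ (Set.Ici (1:ℝ)) (fun u => (u + 1) * Real.log u) := by
  have hderiv : ∀ x ∈ Set.Ioi (1:ℝ), HasDerivAt (fun u : ℝ => (u + 1) * Real.log u)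
      (Real.log x + (x + 1) * x⁻¹) x := by
    intro x hx
    have hx1 : (1:ℝ) < x := hx
    have hx0 : x ≠ 0 := by linarith
    have h1 : HasDerivAt (fun u : ℝ => u + 1) 1 x := (hasDerivAt_id x).add_const 1
    have h2 : HasDerivAt Real.log x⁻¹ x := Real.hasDerivAt_log hx0
    have := h1.mul h2
    simp only [one_mul] at this
    exact this
  apply MonotoneOn.convexOn_of_deriv (convex_Ici 1)
  · apply ContinuousOn.mul (by fun_prop)
    apply Real.continuousOn_log.mono
    intro x hx
    have : (1:ℝ) ≤ x := hx
    simp only [Set.mem_compl_iff, Set.mem_singleton_iff]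
    intro h
    rw [h] at this
    linarith
  · rw [interior_Ici]
    intro x hx
    exact (hderiv x hx).differentiableAt.differentiableWithinAt
  · rw [interior_Ici]
    intro a ha b hb hab
    rw [(hderiv a ha).deriv, (hderiv b hb).deriv]
    have ha1 : (1:ℝ) < a := ha
    have hb1 : (1:ℝ) < b := hb
    have ha0 : (0:ℝ) < a := by linarith
    have hb0 : (0:ℝ) < b := by linarith
    have hlog : 1 - a / b ≤ Real.log b - Real.log a := by
      have h := Real.log_le_sub_one_of_pos (x := a / b) (by positivity)
      rw [Real.log_div (ne_of_gt ha0) (ne_of_gt hb0)] at h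
      linarith
    have hkey : 1 - a / b - (a⁻¹ - b⁻¹) = (b - a) * b⁻¹ * (1 - a⁻¹) := by
      field_simp
    have hnn : 0 ≤ (b - a) * b⁻¹ * (1 - a⁻¹) := by
      apply mul_nonneg (mul_nonneg (by linarith) (by positivity))
      have : a⁻¹ ≤ 1 := by
        rw [inv_le_one_iff₀]
        right; linarith
      linarith
    have hfrac : a⁻¹ - b⁻¹ ≤ 1 - a / b := by linarith
    have e1 : (a + 1) * a⁻¹ = 1 + a⁻¹ := by field_simp
    have e2 : (b + 1) * b⁻¹ = 1 + b⁻¹ := by field_simp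
    rw [e1, e2]
    linarith

lemma log_deg_bound (hdeg : ∀ v : V, 2 ≤ G.degree v) [Nonempty V] :
    Real.log ((∑ v, (G.degree v : ℝ)) / (Fintype.card V : ℝ) - 1)
      ≤ (∑ v, (G.degree v : ℝ))⁻¹
          * ∑ v, (G.degree v : ℝ) * Real.log ((G.degree v : ℝ) - 1) := by
  set n : ℝ := (Fintype.card V : ℝ) with hn_def
  set S : ℝ := ∑ v, (G.degree v : ℝ) with hS_def
  have hn : (0:ℝ) < n := by
    rw [hn_def]
    exact_mod_cast Fintype.card_pos
  have h2nS : 2 * n ≤ S := by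
    rw [hS_def, hn_def]
    calc 2 * (Fintype.card V : ℝ) = ∑ _v : V, (2:ℝ) := by
          rw [Finset.sum_const, nsmul_eq_mul, Finset.card_univ, mul_comm]
      _ ≤ ∑ v, (G.degree v : ℝ) := by
          refine Finset.sum_le_sum fun v _ => ?_
          exact_mod_cast hdeg v
  have hS : (0:ℝ) < S := by linarith
  have hw1 : ∑ _v : V, n⁻¹ = 1 := by
    rw [Finset.sum_const, nsmul_eq_mul, Finset.card_univ, ← hn_def, mul_inv_cancel₀ (ne_of_gt hn)]
  have hj := convexOn_aux.map_sum_le (t := univ) (w := fun _ : V => n⁻¹)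
    (p := fun v => (G.degree v : ℝ) - 1) (fun _ _ => by positivity) hw1
    (fun v _ => by
      have := hdeg v
      have : (2:ℝ) ≤ (G.degree v : ℝ) := by exact_mod_cast this
      simp only [Set.mem_Ici]
      linarith)
  have hpt : ∑ v : V, n⁻¹ • ((G.degree v : ℝ) - 1) = S / n - 1 := by
    simp only [smul_eq_mul]
    rw [← Finset.mul_sum, Finset.sum_sub_distrib, Finset.sum_const, nsmul_eq_mul,
      Finset.card_univ, ← hS_def, ← hn_def]
    field_simp
    try ring
  rw [hpt] at hj
  have hrhs : ∑ v : V, n⁻¹ • (fun u : ℝ => (u + 1) * Real.log u) ((G.degree v : ℝ) - 1)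
      = n⁻¹ * ∑ v, (G.degree v : ℝ) * Real.log ((G.degree v : ℝ) - 1) := by
    rw [Finset.mul_sum]
    refine Finset.sum_congr rfl fun v _ => ?_
    simp only [smul_eq_mul]
    ring
  rw [hrhs] at hj
  rw [show S / n - 1 + 1 = S / n from by ring] at hj
  have hd0 : (0:ℝ) < S / n := by positivity
  have e : Real.log (S / n - 1) = (S / n)⁻¹ * ((S / n) * Real.log (S / n - 1)) := by
    field_simp
  rw [e]
  calc (S / n)⁻¹ * ((S / n) * Real.log (S / n - 1))
      ≤ (S / n)⁻¹ * (n⁻¹ * ∑ v, (G.degree v : ℝ) * Real.log ((G.degree v : ℝ) - 1)) := by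
        apply mul_le_mul_of_nonneg_left hj (by positivity)
    _ = S⁻¹ * ∑ v, (G.degree v : ℝ) * Real.log ((G.degree v : ℝ) - 1) := by
        rw [← mul_assoc]
        congr 1
        field_simp


lemma main_aux (hdeg : ∀ v : V, 2 ≤ G.degree v) [Nonempty V] (i : ℕ) :
    (∑ v, (G.degree v : ℝ)) *
        ((∑ v, (G.degree v : ℝ)) / (Fintype.card V : ℝ) - 1) ^ i
      ≤ ((NRF G (i + 1)).card : ℝ) := by
  set n : ℝ := (Fintype.card V : ℝ) with hn_def
  set S : ℝ := ∑ v, (G.degree v : ℝ) with hS_def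
  have hn : (0:ℝ) < n := by
    rw [hn_def]; exact_mod_cast Fintype.card_pos
  have h2nS : 2 * n ≤ S := by
    rw [hS_def, hn_def]
    calc 2 * (Fintype.card V : ℝ) = ∑ _v : V, (2:ℝ) := by
          rw [Finset.sum_const, nsmul_eq_mul, Finset.card_univ, mul_comm]
      _ ≤ ∑ v, (G.degree v : ℝ) := Finset.sum_le_sum fun v _ => by exact_mod_cast hdeg v
  have hS : (0:ℝ) < S := by linarith
  have hd1 : (1:ℝ) ≤ S / n - 1 := by
    rw [le_sub_iff_add_le, ← sub_nonneg]
    have : S / n - (1 + 1) = (S - 2 * n) / n := by field_simp; ring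
    rw [this]
    exact div_nonneg (by linarith) hn.le
  have hd1' : (0:ℝ) < S / n - 1 := by linarith
  set Z : (Fin (i + 2) → V) → ℝ :=
    fun w => ∏ t ∈ range i, ((G.degree (extW w (t + 1)) : ℝ) - 1) with hZ_def
  have hZpos : ∀ w, 0 < Z w := fun w =>
    Finset.prod_pos fun t _ => degree_real_pos G hdeg _
  have hwtZ : ∀ w : Fin (i + 2) → V, wtW G w * Z w = 1 := by
    intro w
    simp only [hZ_def]
    unfold wtW
    rw [show i + 1 - 1 = i from rfl, ← Finset.prod_mul_distrib]
    exact Finset.prod_eq_one fun t _ =>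
      inv_mul_cancel₀ (ne_of_gt (degree_real_pos G hdeg _))
  have hwt_nonneg : ∀ w : Fin (i + 2) → V, 0 ≤ wtW G w := fun w =>
    Finset.prod_nonneg fun t _ => inv_nonneg.2 (le_of_lt (degree_real_pos G hdeg _))
  have hmass : ∑ w ∈ NRF G (i + 1), wtW G w = S := sum_wtW G hdeg (i + 1) (by omega)
  have hp1 : ∑ w ∈ NRF G (i + 1), S⁻¹ * wtW G w = 1 := by
    rw [← Finset.mul_sum, hmass, inv_mul_cancel₀ (ne_of_gt hS)]
  have hamgm := Real.geom_mean_le_arith_mean_weighted (NRF G (i + 1))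
    (fun w => S⁻¹ * wtW G w) Z
    (fun w _ => mul_nonneg (inv_nonneg.2 hS.le) (hwt_nonneg w)) hp1
    (fun w _ => (hZpos w).le)
  have harith : ∑ w ∈ NRF G (i + 1), (S⁻¹ * wtW G w) * Z w
      = ((NRF G (i + 1)).card : ℝ) * S⁻¹ := by
    have h : ∀ w ∈ NRF G (i + 1), (S⁻¹ * wtW G w) * Z w = S⁻¹ := fun w _ => by
      rw [mul_assoc, hwtZ w, mul_one]
    rw [Finset.sum_congr rfl h, Finset.sum_const, nsmul_eq_mul]
  have hgeom : (S / n - 1) ^ i ≤ ∏ w ∈ NRF G (i + 1), Z w ^ (S⁻¹ * wtW G w) := by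
    have hrpow : ∀ w ∈ NRF G (i + 1),
        Z w ^ (S⁻¹ * wtW G w) = Real.exp (Real.log (Z w) * (S⁻¹ * wtW G w)) :=
      fun w _ => Real.rpow_def_of_pos (hZpos w) _
    rw [Finset.prod_congr rfl hrpow, ← Real.exp_sum]
    have hsum : ∑ w ∈ NRF G (i + 1), Real.log (Z w) * (S⁻¹ * wtW G w)
        = ∑ t ∈ range i, S⁻¹ * ∑ w ∈ NRF G (i + 1),
            wtW G w * Real.log ((G.degree (extW w (t + 1)) : ℝ) - 1) := by
      have hlogZ : ∀ w ∈ NRF G (i + 1), Real.log (Z w) * (S⁻¹ * wtW G w)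
          = ∑ t ∈ range i, S⁻¹ *
              (wtW G w * Real.log ((G.degree (extW w (t + 1)) : ℝ) - 1)) := by
        intro w _
        simp only [hZ_def]
        rw [Real.log_prod (fun t _ => ne_of_gt (degree_real_pos G hdeg _)),
          Finset.sum_mul]
        exact Finset.sum_congr rfl fun t _ => by ring
      rw [Finset.sum_congr rfl hlogZ, Finset.sum_comm]
      exact Finset.sum_congr rfl fun t _ => by rw [← Finset.mul_sum]
    rw [hsum]
    have hmarg : ∀ t ∈ range i,
        S⁻¹ * ∑ w ∈ NRF G (i + 1),
            wtW G w * Real.log ((G.degree (extW w (t + 1)) : ℝ) - 1)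
          = S⁻¹ * ∑ v, (G.degree v : ℝ) * Real.log ((G.degree v : ℝ) - 1) := by
      intro t ht
      rw [Finset.mem_range] at ht
      congr 1
      exact sum_wtW_marg G hdeg (i + 1) (t + 1) (by omega) (by omega)
        (fun v => Real.log ((G.degree v : ℝ) - 1))
    rw [Finset.sum_congr rfl hmarg, Finset.sum_const, Finset.card_range, nsmul_eq_mul]
    have hlb := log_deg_bound G hdeg
    rw [← hS_def, ← hn_def] at hlb
    calc (S / n - 1) ^ i = Real.exp (Real.log (S / n - 1)) ^ i := by
          rw [Real.exp_log hd1']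
      _ = Real.exp ((i : ℝ) * Real.log (S / n - 1)) := by rw [Real.exp_nat_mul]
      _ ≤ Real.exp ((i : ℝ) * (S⁻¹ *
            ∑ v, (G.degree v : ℝ) * Real.log ((G.degree v : ℝ) - 1))) := by
          apply Real.exp_le_exp.2
          exact mul_le_mul_of_nonneg_left hlb (by positivity)
  have hfinal : (S / n - 1) ^ i ≤ ((NRF G (i + 1)).card : ℝ) * S⁻¹ := by
    calc (S / n - 1) ^ i ≤ ∏ w ∈ NRF G (i + 1), Z w ^ (S⁻¹ * wtW G w) := hgeom
      _ ≤ ∑ w ∈ NRF G (i + 1), (S⁻¹ * wtW G w) * Z w := hamgm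
      _ = ((NRF G (i + 1)).card : ℝ) * S⁻¹ := harith
  calc S * (S / n - 1) ^ i ≤ S * (((NRF G (i + 1)).card : ℝ) * S⁻¹) :=
        mul_le_mul_of_nonneg_left hfinal hS.le
    _ = ((NRF G (i + 1)).card : ℝ) := by
        field_simp


lemma count_NRF (i : ℕ) :
    (∑ u : V, ∑ v ∈ G.neighborFinset u, nE G i u v) = (NRF G (i + 1)).card := by
  classical
  have h1 : ∀ u v : V, nE G i u v
      = ((NRF G (i + 1)).filter (fun w => w 0 = u ∧ w 1 = v)).card := by
    intro u v
    rw [nE, Nat.card_eq_fintype_card, Fintype.card_subtype]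
    congr 1
    rw [NRF, Finset.filter_filter]
  have h2 : ∀ u v : V, ((NRF G (i + 1)).filter (fun w => w 0 = u ∧ w 1 = v)).card
      = ∑ w ∈ NRF G (i + 1), if w 0 = u ∧ w 1 = v then 1 else 0 := by
    intro u v
    rw [Finset.card_filter]
  calc ∑ u : V, ∑ v ∈ G.neighborFinset u, nE G i u v
      = ∑ u : V, ∑ v ∈ G.neighborFinset u, ∑ w ∈ NRF G (i + 1),
          if w 0 = u ∧ w 1 = v then 1 else 0 := by
        refine Finset.sum_congr rfl fun u _ => Finset.sum_congr rfl fun v _ => ?_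
        rw [h1, h2]
    _ = ∑ u : V, ∑ w ∈ NRF G (i + 1), ∑ v ∈ G.neighborFinset u,
          (if w 0 = u ∧ w 1 = v then 1 else 0) := by
        exact Finset.sum_congr rfl fun u _ => Finset.sum_comm
    _ = ∑ w ∈ NRF G (i + 1), ∑ u : V, ∑ v ∈ G.neighborFinset u,
          (if w 0 = u ∧ w 1 = v then 1 else 0) := Finset.sum_comm
    _ = ∑ w ∈ NRF G (i + 1), 1 := by
        refine Finset.sum_congr rfl fun w hw => ?_
        have hadj : G.Adj (w 0) (w 1) := by
          have h := ((isNR_iff_ext G w).1 (mem_NRF.1 hw)).1 0 (by omega)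
          rw [extW_eq w (by omega), extW_eq w (by omega)] at h
          have e0 : (⟨0, by omega⟩ : Fin (i + 2)) = 0 := Fin.ext (by simp)
          have e1 : (⟨0 + 1, by omega⟩ : Fin (i + 2)) = 1 := Fin.ext (by simp)
          rwa [e0, e1] at h
        have hptw : ∀ u : V,
            (∑ v ∈ G.neighborFinset u, if w 0 = u ∧ w 1 = v then (1:ℕ) else 0)
              = if w 0 = u then 1 else 0 := by
          intro u
          by_cases hu : w 0 = u
          · simp only [hu, true_and, if_true]
            rw [Finset.sum_ite_eq (G.neighborFinset u) (w 1) (fun _ => (1:ℕ))]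
            have : w 1 ∈ G.neighborFinset u := by
              rw [SimpleGraph.mem_neighborFinset, ← hu]
              exact hadj
            simp [this]
          · simp [hu]
        rw [Finset.sum_congr rfl fun u _ => hptw u,
          Finset.sum_ite_eq Finset.univ (w 0) (fun _ => (1:ℕ))]
        simp
    _ = (NRF G (i + 1)).card := by rw [Finset.sum_const, smul_eq_mul, mul_one]

end Aux

theorem expected_nonreturning_walks_from_random_edge {V : Type*} [Fintype V]
    (G : SimpleGraph V) [DecidableRel G.Adj] (hmin : 2 ≤ G.minDegree)
    (d : ℝ) (hd : d = 2 * (G.edgeFinset.card : ℝ) / (Fintype.card V : ℝ)) (i : ℕ) :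
    (∑ u : V, ∑ v ∈ G.neighborFinset u, (nE G i u v : ℝ)) /
        (2 * (G.edgeFinset.card : ℝ)) ≥ (d - 1) ^ i := by
  classical
  have hdeg : ∀ v : V, 2 ≤ G.degree v := fun v => le_trans hmin (G.minDegree_le_degree v)
  have hne : Nonempty V := by
    rcases isEmpty_or_nonempty V with h | h
    · exfalso
      have h0 : G.minDegree = 0 := by
        simp [SimpleGraph.minDegree, Finset.univ_eq_empty]
      omega
    · exact h
  have hS2m : (∑ v, (G.degree v : ℝ)) = 2 * (G.edgeFinset.card : ℝ) := by
    have h := SimpleGraph.sum_degrees_eq_twice_card_edges G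
    push_cast
    exact_mod_cast congrArg (Nat.cast (R := ℝ)) h
  have hn : (0:ℝ) < (Fintype.card V : ℝ) := by exact_mod_cast Fintype.card_pos
  have h2nS : 2 * (Fintype.card V : ℝ) ≤ ∑ v, (G.degree v : ℝ) := by
    calc 2 * (Fintype.card V : ℝ) = ∑ _v : V, (2:ℝ) := by
          rw [Finset.sum_const, nsmul_eq_mul, Finset.card_univ, mul_comm]
      _ ≤ ∑ v, (G.degree v : ℝ) := Finset.sum_le_sum fun v _ => by exact_mod_cast hdeg v
  have hSpos : (0:ℝ) < ∑ v, (G.degree v : ℝ) := by linarith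
  have hd' : d = (∑ v, (G.degree v : ℝ)) / (Fintype.card V : ℝ) := by
    rw [hd, ← hS2m]
  have hmain := main_aux G hdeg i
  have hcount := count_NRF G i
  have hcast : (∑ u : V, ∑ v ∈ G.neighborFinset u, (nE G i u v : ℝ))
      = ((NRF G (i + 1)).card : ℝ) := by
    rw [← hcount]
    push_cast
    rfl
  rw [hcast, ge_iff_le, le_div_iff₀ (by rw [← hS2m]; exact hSpos)]
  rw [← hS2m, hd']
  calc ((∑ v, (G.degree v : ℝ)) / (Fintype.card V : ℝ) - 1) ^ i * (∑ v, (G.degree v : ℝ))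
      = (∑ v, (G.degree v : ℝ)) *
          ((∑ v, (G.degree v : ℝ)) / (Fintype.card V : ℝ) - 1) ^ i := mul_comm _ _
    _ ≤ ((NRF G (i + 1)).card : ℝ) := hmain
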